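/- Assume the Notation 3.2 setup. Let i and m be natural numbers with f(i) ≤ m+1. Then Σ_{k=0}^{2^{m+2−f(i)}−1} A(k·2^{f(i)})·W_i·A(2^{m+2}−(k+1)·2^{f(i)}) ⊆ U(2^{m+1})A(2^{m+1}) + A(2^{m+1})U(2^{m+1}). -/

import Mathlib

open Module

noncomputable section

/-- The free associative algebra `K⟨x,y⟩` on two generators. -/
abbrev FA (K : Type*) [Field K] := FreeAlgebra K (Fin 2)

/-- The element of `K⟨x,y⟩` given by a word (a list of letters). -/
def wordOf (K : Type*) [Field K] (l : List (Fin 2)) : FA K :=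
  (l.map (FreeAlgebra.ι K)).prod

/-- `a` is a word of length `n` over the two generators. -/
def IsWord (K : Type*) [Field K] (n : ℕ) (a : FA K) : Prop :=
  ∃ l : List (Fin 2), l.length = n ∧ a = wordOf K l

/-- `A(n)`: the span of all words of length `n`. -/
def Aspan (K : Type*) [Field K] (n : ℕ) : Submodule K (FA K) :=
  Submodule.span K {a | IsWord K n a}

/-- The set `T = ∪_{i ≥ 1} {f(i)-g(i)-1, …, f(i)-1}`. -/
def Tset (f g : ℕ → ℕ) : Set ℕ :=
  {n | ∃ i, 1 ≤ i ∧ f i ≤ n + g i + 1 ∧ n + 1 ≤ f i}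

/-- The data and conditions of Notation 3.2 (with the subspaces `U(2^n)`, `V(2^n)`
satisfying conditions (1)–(8) of Proposition 3.1). Here `U n` and `V n` denote the
subspaces `U(2^n)` and `V(2^n)` of `A(2^n)`. -/
structure LSYSetup (K : Type*) [Field K] where
  f : ℕ → ℕ
  g : ℕ → ℕ
  W : ℕ → Submodule K (FA K)
  U : ℕ → Submodule K (FA K)
  V : ℕ → Submodule K (FA K)
  /-- `f(i-1) < f(i) - g(i) - 1` for all `i ≥ 1` -/
  hf : ∀ i, 1 ≤ i → f (i - 1) + g i + 1 < f i
  /-- `W_i ⊆ A(2^{f(i)})` -/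
  hW_le : ∀ i, 1 ≤ i → W i ≤ Aspan K (2 ^ f i)
  /-- `dim W_i ≤ 2^{2^{g(i)}} - 2` -/
  hW_dim : ∀ i, 1 ≤ i → finrank K (W i) ≤ 2 ^ 2 ^ g i - 2
  hU_le : ∀ n, U n ≤ Aspan K (2 ^ n)
  hV_le : ∀ n, V n ≤ Aspan K (2 ^ n)
  /-- (1) `U(2^n) ⊕ V(2^n) = A(2^n)` -/
  h_disj : ∀ n, Disjoint (U n) (V n)
  h_sup : ∀ n, U n ⊔ V n = Aspan K (2 ^ n)
  /-- (2) `dim V(2^n) = 2` whenever `n ∉ T` -/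
  h_dimV : ∀ n, n ∉ Tset f g → finrank K (V n) = 2
  /-- (3) `dim V(2^{n+j}) = 2^{2^j}` whenever `n = f(i)-g(i)-1` and `0 ≤ j ≤ g(i)` -/
  h_dimV' : ∀ i j n, 1 ≤ i → n + g i + 1 = f i → j ≤ g i →
      finrank K (V (n + j)) = 2 ^ 2 ^ j
  /-- (4) `V(2^n)` has a basis consisting of words -/
  h_basis : ∀ n, ∃ s : Set (FA K), (∀ w ∈ s, IsWord K (2 ^ n) w) ∧
      LinearIndependent K ((↑) : s → FA K) ∧ Submodule.span K s = V n
  /-- (5) `W_i ⊆ U(2^{f(i)})` -/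
  hWU : ∀ i, 1 ≤ i → W i ≤ U (f i)
  /-- (6) `A(2^n)U(2^n) + U(2^n)A(2^n) ⊆ U(2^{n+1})` -/
  hU_mul : ∀ n, Aspan K (2 ^ n) * U n ⊔ U n * Aspan K (2 ^ n) ≤ U (n + 1)
  /-- (7) `V(2^{n+1}) ⊆ V(2^n)V(2^n)` -/
  hV_mul : ∀ n, V (n + 1) ≤ V n * V n
  /-- (8) if `n ∉ T` then some word `w ∈ V(2^n)` has `w·A(2^n) ⊆ U(2^{n+1})` -/
  h_word : ∀ n, n ∉ Tset f g → ∃ w, IsWord K (2 ^ n) w ∧ w ∈ V n ∧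
      ∀ a ∈ Aspan K (2 ^ n), w * a ∈ U (n + 1)

variable {K : Type*} [Field K]

/-- `R(n) = {a ∈ A(n) : A(2^{m+1}-n)·a ⊆ U(2^{m+1})}`. -/
def Rspace (S : LSYSetup K) (n m : ℕ) : Submodule K (FA K) where
  carrier := {a | a ∈ Aspan K n ∧ ∀ b ∈ Aspan K (2 ^ (m + 1) - n), b * a ∈ S.U (m + 1)}
  add_mem' := by
    rintro a b ⟨ha1, ha2⟩ ⟨hb1, hb2⟩
    exact ⟨add_mem ha1 hb1, fun c hc => by
      rw [mul_add]; exact add_mem (ha2 c hc) (hb2 c hc)⟩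
  zero_mem' := ⟨zero_mem _, fun c hc => by rw [mul_zero]; exact zero_mem _⟩
  smul_mem' := by
    rintro k a ⟨ha1, ha2⟩
    exact ⟨Submodule.smul_mem _ k ha1, fun c hc => by
      rw [mul_smul_comm]; exact Submodule.smul_mem _ _ (ha2 c hc)⟩

/-- `L(n) = {a ∈ A(n) : a·A(2^{m+1}-n) ⊆ U(2^{m+1})}`. -/
def Lspace (S : LSYSetup K) (n m : ℕ) : Submodule K (FA K) where
  carrier := {a | a ∈ Aspan K n ∧ ∀ b ∈ Aspan K (2 ^ (m + 1) - n), a * b ∈ S.U (m + 1)}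
  add_mem' := by
    rintro a b ⟨ha1, ha2⟩ ⟨hb1, hb2⟩
    exact ⟨add_mem ha1 hb1, fun c hc => by
      rw [add_mul]; exact add_mem (ha2 c hc) (hb2 c hc)⟩
  zero_mem' := ⟨zero_mem _, fun c hc => by rw [zero_mul]; exact zero_mem _⟩
  smul_mem' := by
    rintro k a ⟨ha1, ha2⟩
    exact ⟨Submodule.smul_mem _ k ha1, fun c hc => by
      rw [smul_mul_assoc]; exact Submodule.smul_mem _ _ (ha2 c hc)⟩

/-- `I(n) = {a ∈ A(n) : A(j)·a·A(2^{m+2}-j-n) ⊆ U(2^{m+1})A(2^{m+1}) + A(2^{m+1})U(2^{m+1})`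
for all `0 ≤ j ≤ 2^{m+2}-n}`, where `2^m ≤ n < 2^{m+1}` (i.e. `m = Nat.log 2 n`). -/
def Ispace (S : LSYSetup K) (n : ℕ) : Submodule K (FA K) where
  carrier := {a | a ∈ Aspan K n ∧ ∀ j ≤ 2 ^ (Nat.log 2 n + 2) - n,
      ∀ b ∈ Aspan K j, ∀ c ∈ Aspan K (2 ^ (Nat.log 2 n + 2) - j - n),
      b * a * c ∈ S.U (Nat.log 2 n + 1) * Aspan K (2 ^ (Nat.log 2 n + 1)) ⊔
        Aspan K (2 ^ (Nat.log 2 n + 1)) * S.U (Nat.log 2 n + 1)}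
  add_mem' := by
    rintro a b ⟨ha1, ha2⟩ ⟨hb1, hb2⟩
    refine ⟨add_mem ha1 hb1, fun j hj c hc d hd => ?_⟩
    rw [mul_add, add_mul]
    exact add_mem (ha2 j hj c hc d hd) (hb2 j hj c hc d hd)
  zero_mem' := ⟨zero_mem _, fun j hj c hc d hd => by
    rw [mul_zero, zero_mul]; exact zero_mem _⟩
  smul_mem' := by
    rintro k a ⟨ha1, ha2⟩
    refine ⟨Submodule.smul_mem _ k ha1, fun j hj c hc d hd => ?_⟩
    rw [mul_smul_comm, smul_mul_assoc]
    exact Submodule.smul_mem _ _ (ha2 j hj c hc d hd)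


lemma wordOf_append (l1 l2 : List (Fin 2)) :
    wordOf K (l1 ++ l2) = wordOf K l1 * wordOf K l2 := by
  simp [wordOf]

lemma Aspan_add (p q : ℕ) : Aspan K (p + q) = Aspan K p * Aspan K q := by
  rw [Aspan, Aspan, Aspan, Submodule.span_mul_span]
  congr 1
  ext a
  constructor
  · rintro ⟨l, hl, rfl⟩
    exact ⟨wordOf K (l.take p), ⟨l.take p, by simp [hl], rfl⟩,
      wordOf K (l.drop p), ⟨l.drop p, by simp [hl], rfl⟩,
      by show wordOf K (l.take p) * wordOf K (l.drop p) = wordOf K l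
         rw [← wordOf_append, List.take_append_drop]⟩
  · rintro ⟨x, ⟨l1, h1, rfl⟩, y, ⟨l2, h2, rfl⟩, rfl⟩
    exact ⟨l1 ++ l2, by simp [h1, h2], (wordOf_append l1 l2).symm⟩

lemma Aspan_zero : Aspan K 0 = 1 := by
  have h : {a | IsWord K 0 a} = {(1 : FA K)} := by
    ext a
    constructor
    · rintro ⟨l, hl, rfl⟩
      rw [List.length_eq_zero_iff] at hl
      simp [hl, wordOf]
    · rintro rfl
      exact ⟨[], rfl, by simp [wordOf]⟩
  rw [Aspan, h]
  exact Submodule.one_eq_span.symm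

/-- Aligned blocks `A(k·2^{f i})·W_i·A(2^n − (k+1)·2^{f i})` land in `U(2^n)`. -/
lemma landU (S : LSYSetup K) (i : ℕ) (hi : 1 ≤ i) :
    ∀ n, S.f i ≤ n → ∀ k, (k + 1) * 2 ^ S.f i ≤ 2 ^ n →
      Aspan K (k * 2 ^ S.f i) * S.W i * Aspan K (2 ^ n - (k + 1) * 2 ^ S.f i)
        ≤ S.U n := by
  intro n
  induction n with
  | zero =>
    intro hF k hk
    have hF0 : S.f i = 0 := Nat.le_zero.mp hF
    rw [hF0] at hk
    simp only [pow_zero, mul_one] at hk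
    have hk0 : k = 0 := by omega
    subst hk0
    rw [hF0]
    simp only [Nat.zero_mul, zero_add, one_mul, pow_zero, Nat.sub_self,
      Aspan_zero, one_mul, mul_one]
    rw [← hF0]
    exact S.hWU i hi
  | succ n ih =>
    intro hF k hk
    rcases Nat.lt_or_ge n (S.f i) with hFn | hFn
    · -- f i = n + 1, so k = 0
      have hF1 : S.f i = n + 1 := le_antisymm hF hFn
      have hE : (0:ℕ) < 2 ^ S.f i := by positivity
      have hk0 : k = 0 := by
        have h1 : (k + 1) * 2 ^ S.f i ≤ 1 * 2 ^ S.f i :=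
          hk.trans_eq (by rw [one_mul, hF1])
        have := Nat.le_of_mul_le_mul_right h1 hE
        omega
      subst hk0
      rw [← hF1]
      simp only [Nat.zero_mul, zero_add, one_mul, Nat.sub_self, Aspan_zero,
        one_mul, mul_one]
      exact S.hWU i hi
    · -- f i ≤ n
      have hE : (0:ℕ) < 2 ^ S.f i := Nat.pos_of_ne_zero (by positivity)
      have hpow : 2 ^ (n + 1) = 2 ^ n + 2 ^ n := by rw [pow_succ]; ring
      rcases le_or_gt ((k + 1) * 2 ^ S.f i) (2 ^ n) with hA | hB
      · -- block in left half
        have hsub : 2 ^ (n + 1) - (k + 1) * 2 ^ S.f i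
            = (2 ^ n - (k + 1) * 2 ^ S.f i) + 2 ^ n := by omega
        rw [hsub, Aspan_add, ← mul_assoc]
        calc Aspan K (k * 2 ^ S.f i) * S.W i *
              Aspan K (2 ^ n - (k + 1) * 2 ^ S.f i) * Aspan K (2 ^ n)
            ≤ S.U n * Aspan K (2 ^ n) :=
              mul_le_mul' (ih hFn k hA) le_rfl
          _ ≤ S.U (n + 1) := le_sup_right.trans (S.hU_mul n)
      · -- block in right half
        have hq : 2 ^ n = 2 ^ (n - S.f i) * 2 ^ S.f i := by
          rw [← pow_add]; congr 1; omega
        set q := 2 ^ (n - S.f i) with hqdef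
        have hkq : q ≤ k := by
          by_contra hlt
          push_neg at hlt
          have : (k + 1) * 2 ^ S.f i ≤ q * 2 ^ S.f i :=
            Nat.mul_le_mul_right _ hlt
          omega
        set k' := k - q with hk'def
        have hkk : k = k' + q := by omega
        have h1 : k * 2 ^ S.f i = 2 ^ n + k' * 2 ^ S.f i := by
          rw [hkk, add_mul, hq]; ring
        have ha : (k + 1) * 2 ^ S.f i = k * 2 ^ S.f i + 2 ^ S.f i := by ring
        have hb : (k' + 1) * 2 ^ S.f i = k' * 2 ^ S.f i + 2 ^ S.f i := by ring
        have h3 : (k' + 1) * 2 ^ S.f i ≤ 2 ^ n := by omega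
        have h2 : 2 ^ (n + 1) - (k + 1) * 2 ^ S.f i
            = 2 ^ n - (k' + 1) * 2 ^ S.f i := by omega
        rw [h1, h2, Aspan_add, mul_assoc, mul_assoc,
          ← mul_assoc (Aspan K (k' * 2 ^ S.f i))]
        calc Aspan K (2 ^ n) * (Aspan K (k' * 2 ^ S.f i) * S.W i *
              Aspan K (2 ^ n - (k' + 1) * 2 ^ S.f i))
            ≤ Aspan K (2 ^ n) * S.U n :=
              mul_le_mul' le_rfl (ih hFn k' h3)
          _ ≤ S.U (n + 1) := le_sup_left.trans (S.hU_mul n)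

/-- If `f(i) ≤ m + 1`, then
`Σ_{k=0}^{2^{m+2-f(i)}-1} A(k·2^{f(i)})·W_i·A(2^{m+2} - (k+1)·2^{f(i)})
  ⊆ U(2^{m+1})A(2^{m+1}) + A(2^{m+1})U(2^{m+1})`. -/
theorem relations_land_in_U (S : LSYSetup K) (i m : ℕ) (hi : 1 ≤ i)
    (hfi : S.f i ≤ m + 1) :
    (∑ k ∈ Finset.range (2 ^ (m + 2 - S.f i)),
        Aspan K (k * 2 ^ S.f i) * S.W i * Aspan K (2 ^ (m + 2) - (k + 1) * 2 ^ S.f i))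
      ≤ S.U (m + 1) * Aspan K (2 ^ (m + 1)) ⊔ Aspan K (2 ^ (m + 1)) * S.U (m + 1) := by
  refine Finset.sum_induction _ (fun M => M ≤ _)
    (fun a b ha hb => ?_) (by simp) (fun k hk => ?_)
  · rw [Submodule.add_eq_sup]; exact sup_le ha hb
  · rw [Finset.mem_range] at hk
    have hE : (0:ℕ) < 2 ^ S.f i := Nat.pos_of_ne_zero (by positivity)
    have hk2 : (k + 1) * 2 ^ S.f i ≤ 2 ^ (m + 2) := by
      calc (k + 1) * 2 ^ S.f i ≤ 2 ^ (m + 2 - S.f i) * 2 ^ S.f i :=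
            Nat.mul_le_mul_right _ hk
        _ = 2 ^ (m + 2) := by rw [← pow_add]; congr 1; omega
    have hpow : 2 ^ (m + 2) = 2 ^ (m + 1) + 2 ^ (m + 1) := by
      rw [pow_succ]; ring
    rcases le_or_gt ((k + 1) * 2 ^ S.f i) (2 ^ (m + 1)) with hA | hB
    · -- block in left half
      have hsub : 2 ^ (m + 2) - (k + 1) * 2 ^ S.f i
          = (2 ^ (m + 1) - (k + 1) * 2 ^ S.f i) + 2 ^ (m + 1) := by omega
      rw [hsub, Aspan_add, ← mul_assoc]
      calc Aspan K (k * 2 ^ S.f i) * S.W i *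
            Aspan K (2 ^ (m + 1) - (k + 1) * 2 ^ S.f i) * Aspan K (2 ^ (m + 1))
          ≤ S.U (m + 1) * Aspan K (2 ^ (m + 1)) :=
            mul_le_mul' (landU S i hi (m + 1) hfi k hA) le_rfl
        _ ≤ _ := le_sup_left
    · -- block in right half
      have hq : 2 ^ (m + 1) = 2 ^ (m + 1 - S.f i) * 2 ^ S.f i := by
        rw [← pow_add]; congr 1; omega
      set q := 2 ^ (m + 1 - S.f i) with hqdef
      have hkq : q ≤ k := by
        by_contra hlt
        push_neg at hlt
        have : (k + 1) * 2 ^ S.f i ≤ q * 2 ^ S.f i :=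
          Nat.mul_le_mul_right _ hlt
        omega
      set k' := k - q with hk'def
      have hkk : k = k' + q := by omega
      have h1 : k * 2 ^ S.f i = 2 ^ (m + 1) + k' * 2 ^ S.f i := by
        rw [hkk, add_mul, hq]; ring
      have ha : (k + 1) * 2 ^ S.f i = k * 2 ^ S.f i + 2 ^ S.f i := by ring
      have hb : (k' + 1) * 2 ^ S.f i = k' * 2 ^ S.f i + 2 ^ S.f i := by ring
      have h3 : (k' + 1) * 2 ^ S.f i ≤ 2 ^ (m + 1) := by omega
      have h2 : 2 ^ (m + 2) - (k + 1) * 2 ^ S.f i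
          = 2 ^ (m + 1) - (k' + 1) * 2 ^ S.f i := by omega
      rw [h1, h2, Aspan_add, mul_assoc, mul_assoc,
        ← mul_assoc (Aspan K (k' * 2 ^ S.f i))]
      calc Aspan K (2 ^ (m + 1)) * (Aspan K (k' * 2 ^ S.f i) * S.W i *
            Aspan K (2 ^ (m + 1) - (k' + 1) * 2 ^ S.f i))
          ≤ Aspan K (2 ^ (m + 1)) * S.U (m + 1) :=
            mul_le_mul' le_rfl (landU S i hi (m + 1) hfi k' h3)
        _ ≤ _ := le_sup_right

end
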